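/- arXiv:1702.06741 — 3 statements merged into one kernel-verified Lean document; each statement's English description precedes it below -/
import Mathlib

section
/- Let α : [0,1] → End(ℝ^d) be continuous, S solve S' + αS = 0 with S(0) = I, and endow the Cameron–Martin space H(ℝ^d) with the inner product ⟨h,k⟩_α = ∫₀¹ (h'+αh)·(k'+αk) dt. Let E₁ : H(ℝ^d) → ℝ^d be the endpoint map E₁h = h(1). Then the adjoint E₁* of E₁ with respect to ⟨·,·⟩_α (i.e., satisfying E₁h · a = ⟨h, E₁*a⟩_α for all h, a) is given by (E₁*a)(t) = S(t) (∫₀ᵗ (S(s)*S(s))⁻¹ ds) S(1)* a. -/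
open Matrix
open scoped Matrix.Norms.L2Operator

open scoped NNReal

noncomputable def bilinMV (d e : ℕ) : Matrix (Fin d) (Fin e) ℝ →ₗ[ℝ] (Fin e → ℝ) →ₗ[ℝ] (Fin d → ℝ) :=
  LinearMap.mk₂ ℝ (fun A w => A *ᵥ w) Matrix.add_mulVec (fun c A w => Matrix.smul_mulVec c A w)
    Matrix.mulVec_add (fun c A w => Matrix.mulVec_smul A c w)

noncomputable def bilinDot (d : ℕ) : (Fin d → ℝ) →ₗ[ℝ] (Fin d → ℝ) →ₗ[ℝ] ℝ :=
  LinearMap.mk₂ ℝ (fun u w => u ⬝ᵥ w) add_dotProduct smul_dotProduct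
    dotProduct_add dotProduct_smul

theorem hasDerivWithinAt_bilin {E F G : Type*} [NormedAddCommGroup E] [NormedSpace ℝ E]
    [FiniteDimensional ℝ E] [NormedAddCommGroup F] [NormedSpace ℝ F] [FiniteDimensional ℝ F]
    [NormedAddCommGroup G] [NormedSpace ℝ G] (B : E →ₗ[ℝ] F →ₗ[ℝ] G) {u : ℝ → E} {w : ℝ → F}
    {u' : E} {w' : F} {s : Set ℝ} {x : ℝ}
    (hu : HasDerivWithinAt u u' s x) (hw : HasDerivWithinAt w w' s x) :
    HasDerivWithinAt (fun t => B (u t) (w t)) (B u' (w x) + B (u x) w') s x := by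
  let B₁ : E →ₗ[ℝ] (F →L[ℝ] G) :=
    (LinearMap.toContinuousLinearMap : (F →ₗ[ℝ] G) ≃ₗ[ℝ] (F →L[ℝ] G)).toLinearMap ∘ₗ B
  let B₂ : E →L[ℝ] (F →L[ℝ] G) := LinearMap.toContinuousLinearMap B₁
  have hc : HasDerivWithinAt (fun t => B₂ (u t)) (B₂ u') s x :=
    B₂.hasFDerivAt.comp_hasDerivWithinAt x hu
  have := hc.clm_apply hw
  simpa [B₂, B₁] using this

theorem hasDerivWithinAt_mulVec {d e : ℕ} {A : ℝ → Matrix (Fin d) (Fin e) ℝ} {w : ℝ → Fin e → ℝ}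
    {A' : Matrix (Fin d) (Fin e) ℝ} {w' : Fin e → ℝ} {s : Set ℝ} {x : ℝ}
    (hA : HasDerivWithinAt A A' s x) (hw : HasDerivWithinAt w w' s x) :
    HasDerivWithinAt (fun t => A t *ᵥ w t) (A' *ᵥ w x + A x *ᵥ w') s x := by
  simpa [bilinMV] using hasDerivWithinAt_bilin (bilinMV d e) hA hw

theorem hasDerivWithinAt_dotProduct {d : ℕ} {u w : ℝ → Fin d → ℝ}
    {u' w' : Fin d → ℝ} {s : Set ℝ} {x : ℝ}
    (hu : HasDerivWithinAt u u' s x) (hw : HasDerivWithinAt w w' s x) :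
    HasDerivWithinAt (fun t => u t ⬝ᵥ w t) (u' ⬝ᵥ w x + u x ⬝ᵥ w') s x := by
  simpa [bilinDot] using hasDerivWithinAt_bilin (bilinDot d) hu hw


theorem continuousOn_bilin {E F G : Type*} [NormedAddCommGroup E] [NormedSpace ℝ E]
    [FiniteDimensional ℝ E] [NormedAddCommGroup F] [NormedSpace ℝ F] [FiniteDimensional ℝ F]
    [NormedAddCommGroup G] [NormedSpace ℝ G] (B : E →ₗ[ℝ] F →ₗ[ℝ] G) {u : ℝ → E} {w : ℝ → F}
    {s : Set ℝ} (hu : ContinuousOn u s) (hw : ContinuousOn w s) :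
    ContinuousOn (fun t => B (u t) (w t)) s := by
  let B₁ : E →ₗ[ℝ] (F →L[ℝ] G) :=
    (LinearMap.toContinuousLinearMap : (F →ₗ[ℝ] G) ≃ₗ[ℝ] (F →L[ℝ] G)).toLinearMap ∘ₗ B
  let B₂ : E →L[ℝ] (F →L[ℝ] G) := LinearMap.toContinuousLinearMap B₁
  have := B₂.continuous₂.comp_continuousOn (hu.prodMk hw)
  simpa [Function.uncurry, Function.comp_def, B₂, B₁] using this

theorem aestronglyMeasurable_bilin {E F G : Type*} [NormedAddCommGroup E] [NormedSpace ℝ E]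
    [FiniteDimensional ℝ E] [NormedAddCommGroup F] [NormedSpace ℝ F] [FiniteDimensional ℝ F]
    [NormedAddCommGroup G] [NormedSpace ℝ G] (B : E →ₗ[ℝ] F →ₗ[ℝ] G) {u : ℝ → E} {w : ℝ → F}
    {μ : MeasureTheory.Measure ℝ} (hu : MeasureTheory.AEStronglyMeasurable u μ)
    (hw : MeasureTheory.AEStronglyMeasurable w μ) :
    MeasureTheory.AEStronglyMeasurable (fun t => B (u t) (w t)) μ := by
  let B₁ : E →ₗ[ℝ] (F →L[ℝ] G) :=
    (LinearMap.toContinuousLinearMap : (F →ₗ[ℝ] G) ≃ₗ[ℝ] (F →L[ℝ] G)).toLinearMap ∘ₗ B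
  let B₂ : E →L[ℝ] (F →L[ℝ] G) := LinearMap.toContinuousLinearMap B₁
  have := B₂.continuous₂.comp_aestronglyMeasurable (hu.prodMk hw)
  simpa [Function.uncurry, B₂, B₁] using this

theorem aux_isUnit {d : ℕ} (α S : ℝ → Matrix (Fin d) (Fin d) ℝ)
    (hα : ContinuousOn α (Set.Icc (0:ℝ) 1))
    (hS : ∀ t ∈ Set.Icc (0:ℝ) 1, HasDerivWithinAt S (-(α t * S t)) (Set.Icc (0:ℝ) 1) t)
    (hS0 : S 0 = 1) : ∀ t ∈ Set.Icc (0:ℝ) 1, IsUnit (S t) := by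
  intro t₀ ht₀
  rw [← Matrix.mulVec_injective_iff_isUnit]
  have key : ∀ z, S t₀ *ᵥ z = 0 → z = 0 := by
    intro z hz
    set proj : ℝ → ℝ := fun t => max 0 (min t 1) with hproj
    have hprojmem : ∀ t, proj t ∈ Set.Icc (0:ℝ) 1 :=
      fun t => ⟨le_max_left _ _, max_le (by norm_num) (min_le_right _ _)⟩
    have hprojeq : ∀ t ∈ Set.Icc (0:ℝ) 1, proj t = t := fun t ht => by
      simp [hproj, min_eq_left ht.2, max_eq_right ht.1]
    set L : Matrix (Fin d) (Fin d) ℝ →L[ℝ] ((Fin d → ℝ) →L[ℝ] (Fin d → ℝ)) :=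
      LinearMap.toContinuousLinearMap
        ((LinearMap.toContinuousLinearMap :
          ((Fin d → ℝ) →ₗ[ℝ] (Fin d → ℝ)) ≃ₗ[ℝ] ((Fin d → ℝ) →L[ℝ] (Fin d → ℝ))).toLinearMap ∘ₗ
          bilinMV d d) with hL
    have hLapp : ∀ (A : Matrix (Fin d) (Fin d) ℝ) (y : Fin d → ℝ), L A y = A *ᵥ y := by
      intro A y; simp [hL, bilinMV]
    set β : ℝ → Matrix (Fin d) (Fin d) ℝ := fun t => -(α (proj t)) with hβ
    have hβcont : ContinuousOn β (Set.Icc (0:ℝ) 1) := by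
      apply ContinuousOn.neg
      exact hα.comp ((continuous_const.max (continuous_id.min continuous_const)).continuousOn)
        fun t ht => hprojmem t
    obtain ⟨C, hC⟩ := isCompact_Icc.exists_bound_of_continuousOn
      (L.continuous.comp_continuousOn hβcont)
    set K : ℝ≥0 := ⟨max C 0, le_max_right _ _⟩ with hK
    have hv : ∀ t, LipschitzOnWith K (fun y => L (β t) y) Set.univ := by
      intro t
      apply LipschitzWith.lipschitzOnWith
      apply (L (β t)).lipschitz.weaken
      rw [← NNReal.coe_le_coe]
      have hββ : β t = β (proj t) := by
        simp only [hβ]; rw [hprojeq (proj t) (hprojmem t)]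
      rw [hββ]
      exact le_trans (hC (proj t) (hprojmem t)) (le_max_left _ _)
    set W : Matrix (Fin d) (Fin d) ℝ →L[ℝ] (Fin d → ℝ) :=
      LinearMap.toContinuousLinearMap ((bilinMV d d).flip z) with hW
    have hWapp : ∀ A : Matrix (Fin d) (Fin d) ℝ, W A = A *ᵥ z := by intro A; simp [hW, bilinMV]
    have hIcc : Set.Icc (0:ℝ) t₀ ⊆ Set.Icc (0:ℝ) 1 := Set.Icc_subset_Icc le_rfl ht₀.2
    have hfc : ContinuousOn (fun t => S t *ᵥ z) (Set.Icc (0:ℝ) t₀) := by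
      have : ContinuousOn S (Set.Icc (0:ℝ) 1) := fun t ht => (hS t ht).continuousWithinAt
      have := W.continuous.comp_continuousOn (this.mono hIcc)
      simpa [hWapp, Function.comp_def] using this
    have hf' : ∀ t ∈ Set.Ioc (0:ℝ) t₀,
        HasDerivWithinAt (fun t => S t *ᵥ z) ((fun y => L (β t) y) (S t *ᵥ z)) (Set.Iic t) t := by
      intro t ht
      have htI : t ∈ Set.Icc (0:ℝ) 1 := ⟨ht.1.le, ht.2.trans ht₀.2⟩
      have hmem : Set.Icc (0:ℝ) 1 ∈ nhdsWithin t (Set.Iic t) := by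
        rw [mem_nhdsWithin]
        exact ⟨Set.Ioi 0, isOpen_Ioi, ht.1, fun s hs => ⟨hs.1.le, hs.2.trans htI.2⟩⟩
      have hd := (hS t htI).mono_of_mem_nhdsWithin hmem
      have := W.hasFDerivAt.comp_hasDerivWithinAt t hd
      convert this using 1
      case e'_4 | e'_5 | e'_6 => rfl
      case e'_8 => funext t; simp [hWapp]
      simp [hWapp, hLapp, hβ, hprojeq t htI, Matrix.neg_mulVec, Matrix.mulVec_mulVec]
    have huniq := ODE_solution_unique_of_mem_Icc_left (fun t _ => hv t) hfc hf'
      (fun t _ => Set.mem_univ _) continuousOn_const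
      (fun t ht => by simpa using (hasDerivWithinAt_const t (Set.Iic t) (0 : Fin d → ℝ)))
      (fun t _ => Set.mem_univ _) hz
    have h0 := huniq (Set.left_mem_Icc.mpr ht₀.1)
    simpa [hS0] using h0
  intro x y hxy
  have := key (x - y) (by rw [Matrix.mulVec_sub, hxy, sub_self])
  exact sub_eq_zero.mp this

/-- The adjoint of the endpoint map `E₁ h = h 1` on the Cameron–Martin space with the
`α`-inner product `⟨h,k⟩_α = ∫₀¹ (h'+αh)·(k'+αk)` is given by
`(E₁* a) t = S t (∫₀ᵗ (S s)ᴴ S s)⁻¹ ds) (S 1)ᴴ a`, i.e. `⟨h, E₁* a⟩_α = h 1 ⬝ᵥ a`. -/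
theorem stmt5 {d : ℕ} (α S : ℝ → Matrix (Fin d) (Fin d) ℝ) (a : Fin d → ℝ)
    (h h' k' : ℝ → Fin d → ℝ)
    (hα : ContinuousOn α (Set.Icc (0 : ℝ) 1))
    (hS : ∀ t ∈ Set.Icc (0 : ℝ) 1,
      HasDerivWithinAt S (-(α t * S t)) (Set.Icc (0 : ℝ) 1) t)
    (hS0 : S 0 = 1)
    (hh0 : h 0 = 0)
    (hh : ∀ t ∈ Set.Icc (0 : ℝ) 1, HasDerivWithinAt h (h' t) (Set.Icc (0 : ℝ) 1) t)
    (hh2 : IntervalIntegrable (fun t => (h' t) ⬝ᵥ (h' t)) MeasureTheory.volume 0 1)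
    (k : ℝ → Fin d → ℝ)
    (hk : k = fun t => S t *ᵥ ((∫ s in (0 : ℝ)..t, ((S s)ᴴ * S s)⁻¹) *ᵥ ((S 1)ᴴ *ᵥ a)))
    (hk' : ∀ t ∈ Set.Icc (0 : ℝ) 1, HasDerivWithinAt k (k' t) (Set.Icc (0 : ℝ) 1) t) :
    ∫ t in (0 : ℝ)..1, (h' t + α t *ᵥ h t) ⬝ᵥ (k' t + α t *ᵥ k t) = h 1 ⬝ᵥ a := by
  have hstar : ∀ A : Matrix (Fin d) (Fin d) ℝ, Aᴴ = Aᵀ := fun A => Matrix.ext fun i j => by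
    simp [Matrix.conjTranspose_apply]
  set I : Set ℝ := Set.Icc (0:ℝ) 1 with hI
  have hUnit : ∀ t ∈ I, IsUnit (S t) := aux_isUnit α S hα hS hS0
  have hDet : ∀ t ∈ I, IsUnit (S t).det := fun t ht =>
    (Matrix.isUnit_iff_isUnit_det _).mp (hUnit t ht)
  have SC : ContinuousOn S I := fun t ht => (hS t ht).continuousWithinAt
  set c : Fin d → ℝ := (S 1)ᴴ *ᵥ a with hc
  set G : ℝ → Matrix (Fin d) (Fin d) ℝ := fun s => ((S s)ᴴ * S s)⁻¹ with hG
  set M : ℝ → Matrix (Fin d) (Fin d) ℝ := fun t => ∫ s in (0:ℝ)..t, G s with hM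
  -- continuity of G
  have hSHS : ContinuousOn (fun s => (S s)ᴴ * S s) I := by
    have h1 : ContinuousOn (fun s => (S s)ᴴ) I := by
      have : Continuous (fun A : Matrix (Fin d) (Fin d) ℝ => Aᴴ) := by
        simp only [hstar]; exact
          (Matrix.transposeLinearEquiv (Fin d) (Fin d) ℝ ℝ).toLinearMap.continuous_of_finiteDimensional
      exact this.comp_continuousOn SC
    exact h1.mul SC
  have hdetSHS : ∀ t ∈ I, IsUnit ((S t)ᴴ * S t).det := by
    intro t ht
    rw [Matrix.det_mul, hstar, Matrix.det_transpose]
    exact (hDet t ht).mul (hDet t ht)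
  have hGc : ContinuousOn G I := by
    intro t ht
    have h2 : ContinuousAt Inv.inv ((S t)ᴴ * S t) :=
      continuousAt_matrix_inv _ (by
        rw [Ring.inverse_eq_inv']
        exact continuousAt_inv₀ (hdetSHS t ht).ne_zero)
    have h3 : ContinuousWithinAt (Inv.inv ∘ fun s => (S s)ᴴ * S s) I t :=
      ContinuousAt.comp_continuousWithinAt (g := Inv.inv)
      (f := fun s => (S s)ᴴ * S s) (x := t) (s := I) h2 (hSHS t ht)
    exact h3
  -- derivative of M
  have hMd : ∀ t ∈ I, HasDerivWithinAt M (G t) I t := by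
    intro t ht
    haveI : Fact (t ∈ Set.Icc (0:ℝ) 1) := ⟨ht⟩
    have hGint : IntervalIntegrable G MeasureTheory.volume 0 t := by
      apply ContinuousOn.intervalIntegrable
      apply hGc.mono
      rw [Set.uIcc_of_le ht.1]
      exact Set.Icc_subset_Icc le_rfl ht.2
    exact intervalIntegral.integral_hasDerivWithinAt_right hGint
      (hGc.stronglyMeasurableAtFilter_nhdsWithin measurableSet_Icc t)
      (hGc t ht)
  -- computed derivative of k, and key identity
  have hkval : ∀ t, k t = S t *ᵥ (M t *ᵥ c) := fun t => by rw [hk]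
  have hkd : ∀ t ∈ I, HasDerivWithinAt k
      ((-(α t * S t)) *ᵥ (M t *ᵥ c) + S t *ᵥ (G t *ᵥ c)) I t := by
    intro t ht
    have hin : HasDerivWithinAt (fun t => M t *ᵥ c) (G t *ᵥ c) I t := by
      simpa using hasDerivWithinAt_mulVec (hMd t ht) (hasDerivWithinAt_const t I c)
    have := hasDerivWithinAt_mulVec (hS t ht) hin
    simp only [hk]
    convert this using 2
  have hkeq : ∀ t ∈ I, k' t = (-(α t * S t)) *ᵥ (M t *ᵥ c) + S t *ᵥ (G t *ᵥ c) := by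
    intro t ht
    have h1 := (hk' t ht).derivWithin (uniqueDiffOn_Icc_zero_one t ht)
    have h2 := (hkd t ht).derivWithin (uniqueDiffOn_Icc_zero_one t ht)
    rw [← h1, ← h2]
  -- the function v
  set φ : Matrix (Fin d) (Fin d) ℝ →ₗ[ℝ] (Fin d → ℝ) :=
    (bilinMV d d).flip c ∘ₗ (Matrix.transposeLinearEquiv (Fin d) (Fin d) ℝ ℝ).toLinearMap with hφ
  have hφapp : ∀ A : Matrix (Fin d) (Fin d) ℝ, φ A = Aᵀ *ᵥ c := fun A => by
    simp [hφ, bilinMV, Matrix.transposeLinearEquiv]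
  set v : ℝ → Fin d → ℝ := fun t => φ (Ring.inverse (S t)) with hv
  have hvval : ∀ t ∈ I, v t = S t *ᵥ (G t *ᵥ c) := by
    intro t ht
    rw [hv]
    simp only
    rw [← Matrix.nonsing_inv_eq_ringInverse, hφapp, hG]
    simp only [Matrix.mulVec_mulVec]
    congr 1
    rw [hstar, Matrix.mul_inv_rev, ← Matrix.mul_assoc, Matrix.mul_nonsing_inv _ (hDet t ht),
      Matrix.one_mul, Matrix.transpose_nonsing_inv]
  -- derivative of v
  have hvd : ∀ t ∈ I, HasDerivWithinAt v ((α t)ᵀ *ᵥ v t) I t := by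
    intro t ht
    have hinvd : HasDerivWithinAt (fun t => Ring.inverse (S t)) ((S t)⁻¹ * α t) I t := by
      obtain ⟨u, hu⟩ := hUnit t ht
      have h1 := hasFDerivAt_ringInverse (𝕜 := ℝ) u
      rw [hu] at h1
      have h2 := h1.comp_hasDerivWithinAt t (hS t ht)
      convert h2 using 1
      case e'_4 | e'_5 | e'_6 | e'_8 => rfl
      have hcoe : (↑u⁻¹ : Matrix (Fin d) (Fin d) ℝ) = (S t)⁻¹ := by
        rw [← hu]; exact (Matrix.coe_units_inv u).symm ▸ rfl
      simp only [ContinuousLinearMap.neg_apply, ContinuousLinearMap.mulLeftRight_apply, hcoe]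
      rw [Matrix.mul_neg, Matrix.neg_mul, neg_neg, Matrix.mul_assoc, Matrix.mul_assoc,
        Matrix.mul_nonsing_inv _ (hDet t ht), Matrix.mul_one]
    have h3 := (LinearMap.toContinuousLinearMap φ).hasFDerivAt.comp_hasDerivWithinAt t hinvd
    have h4 : HasDerivWithinAt v (φ ((S t)⁻¹ * α t)) I t := by
      simpa [hv, Function.comp_def] using h3
    convert h4 using 1
    rw [hφapp, Matrix.transpose_mul, ← Matrix.mulVec_mulVec]
    congr 1
    rw [hv]
    simp only
    rw [← Matrix.nonsing_inv_eq_ringInverse, hφapp]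
  -- continuity of v
  have hvc : ContinuousOn v I := by
    intro t ht
    have h1 : ContinuousAt Ring.inverse (S t) := NormedRing.inverse_continuousAt (hUnit t ht).unit
    have h2 : ContinuousWithinAt (Ring.inverse ∘ S) I t :=
      ContinuousAt.comp_continuousWithinAt (g := Ring.inverse) (f := S) (x := t) (s := I) h1 (SC t ht)
    have h3 : ContinuousWithinAt ((⇑(LinearMap.toContinuousLinearMap φ)) ∘ (Ring.inverse ∘ S)) I t :=
      ContinuousAt.comp_continuousWithinAt
        ((LinearMap.toContinuousLinearMap φ).continuous.continuousAt) h2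
    simpa [Function.comp_def] using h3
  have hhc : ContinuousOn h I := fun t ht => (hh t ht).continuousWithinAt
  -- F and its derivative
  set F : ℝ → ℝ := fun t => h t ⬝ᵥ v t with hF
  have hFd : ∀ t ∈ I, HasDerivWithinAt F ((h' t + α t *ᵥ h t) ⬝ᵥ v t) I t := by
    intro t ht
    have := hasDerivWithinAt_dotProduct (hh t ht) (hvd t ht)
    convert this using 1
    rw [add_dotProduct]
    congr 1
    rw [Matrix.dotProduct_mulVec, Matrix.vecMul_transpose]
  have hFc : ContinuousOn F I := continuousOn_bilin (bilinDot d) hhc hvc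
  -- key pointwise identity
  have hkey : ∀ t ∈ I, k' t + α t *ᵥ k t = v t := by
    intro t ht
    rw [hkeq t ht, hkval t, hvval t ht]
    have hmm : α t *ᵥ (S t *ᵥ (M t *ᵥ c)) = (α t * S t) *ᵥ (M t *ᵥ c) := by
      rw [Matrix.mulVec_mulVec]
    rw [Matrix.neg_mulVec, hmm]
    abel
  -- rewrite the integral
  have hcongr : Set.EqOn (fun t => (h' t + α t *ᵥ h t) ⬝ᵥ (k' t + α t *ᵥ k t))
      (fun t => (h' t + α t *ᵥ h t) ⬝ᵥ v t) (Set.uIcc (0:ℝ) 1) := by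
    rw [Set.uIcc_of_le zero_le_one]
    intro t ht
    simp only
    rw [hkey t ht]
  rw [intervalIntegral.integral_congr hcongr]
  -- measurability of h'
  have hres : MeasureTheory.volume.restrict (Set.Ioc (0:ℝ) 1)
      = MeasureTheory.volume.restrict (Set.Ioo (0:ℝ) 1) :=
    (MeasureTheory.Measure.restrict_congr_set MeasureTheory.Ioo_ae_eq_Ioc).symm
  have hmem_Ici : ∀ t ∈ Set.Ioo (0:ℝ) 1, Set.Icc (0:ℝ) 1 ∈ nhdsWithin t (Set.Ici t) := by
    intro t ht
    rw [mem_nhdsWithin]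
    exact ⟨Set.Iio 1, isOpen_Iio, ht.2, fun s hs => ⟨ht.1.le.trans hs.2, hs.1.le⟩⟩
  have hmeas_h' : MeasureTheory.AEStronglyMeasurable h'
      (MeasureTheory.volume.restrict (Set.Ioc (0:ℝ) 1)) := by
    rw [hres]
    apply ((measurable_derivWithin_Ici h).aestronglyMeasurable).congr
    rw [Filter.EventuallyEq, MeasureTheory.ae_restrict_iff' measurableSet_Ioo]
    apply Filter.Eventually.of_forall
    intro t ht
    have h1 : HasDerivWithinAt h (h' t) (Set.Ici t) t :=
      (hh t ⟨ht.1.le, ht.2.le⟩).mono_of_mem_nhdsWithin (hmem_Ici t ht)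
    exact h1.derivWithin (uniqueDiffOn_Ici t t Set.self_mem_Ici)
  have hvmeas : MeasureTheory.AEStronglyMeasurable v
      (MeasureTheory.volume.restrict (Set.Ioc (0:ℝ) 1)) :=
    (hvc.mono Set.Ioc_subset_Icc_self).aestronglyMeasurable measurableSet_Ioc
  -- integrability
  have hint1 : IntervalIntegrable (fun t => h' t ⬝ᵥ v t) MeasureTheory.volume 0 1 := by
    rw [intervalIntegrable_iff_integrableOn_Ioc_of_le zero_le_one]
    have hmeasprod : MeasureTheory.AEStronglyMeasurable (fun t => h' t ⬝ᵥ v t)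
        (MeasureTheory.volume.restrict (Set.Ioc (0:ℝ) 1)) := by
      simpa [bilinDot] using aestronglyMeasurable_bilin (bilinDot d) hmeas_h' hvmeas
    have hvv : ContinuousOn (fun t => v t ⬝ᵥ v t) I := continuousOn_bilin (bilinDot d) hvc hvc
    have hgint : MeasureTheory.Integrable
        (fun t => (1/2) * (h' t ⬝ᵥ h' t) + (1/2) * (v t ⬝ᵥ v t))
        (MeasureTheory.volume.restrict (Set.Ioc (0:ℝ) 1)) := by
      apply MeasureTheory.Integrable.add
      · exact ((intervalIntegrable_iff_integrableOn_Ioc_of_le zero_le_one).mp hh2).const_mul _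
      · have h5 : IntervalIntegrable (fun t => v t ⬝ᵥ v t) MeasureTheory.volume 0 1 :=
          ContinuousOn.intervalIntegrable (by rw [Set.uIcc_of_le zero_le_one]; exact hvv)
        exact ((intervalIntegrable_iff_integrableOn_Ioc_of_le zero_le_one).mp h5).const_mul _
    apply MeasureTheory.Integrable.mono' hgint hmeasprod
    apply Filter.Eventually.of_forall
    intro t
    have hb : ∀ (x y : Fin d → ℝ), ‖x ⬝ᵥ y‖ ≤ (1/2) * (x ⬝ᵥ x) + (1/2) * (y ⬝ᵥ y) := by
      intro x y
      rw [Real.norm_eq_abs]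
      calc |x ⬝ᵥ y| ≤ ∑ i, |x i * y i| := Finset.abs_sum_le_sum_abs _ _
        _ ≤ ∑ i, ((1/2) * (x i * x i) + (1/2) * (y i * y i)) := by
            apply Finset.sum_le_sum
            intro i _
            rw [abs_mul]
            nlinarith [sq_nonneg (|x i| - |y i|), sq_abs (x i), sq_abs (y i), abs_nonneg (x i), abs_nonneg (y i)]
        _ = (1/2) * (x ⬝ᵥ x) + (1/2) * (y ⬝ᵥ y) := by
            rw [Finset.sum_add_distrib, ← Finset.mul_sum, ← Finset.mul_sum]
            rfl
    exact hb (h' t) (v t)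
  have hαh : ContinuousOn (fun t => α t *ᵥ h t) I := continuousOn_bilin (bilinMV d d) hα hhc
  have hint2 : IntervalIntegrable (fun t => (α t *ᵥ h t) ⬝ᵥ v t) MeasureTheory.volume 0 1 := by
    apply ContinuousOn.intervalIntegrable
    rw [Set.uIcc_of_le zero_le_one]
    exact continuousOn_bilin (bilinDot d) hαh hvc
  have hintegrand : (fun t => (h' t + α t *ᵥ h t) ⬝ᵥ v t)
      = fun t => h' t ⬝ᵥ v t + (α t *ᵥ h t) ⬝ᵥ v t := by
    funext t; rw [add_dotProduct]
  have hint : IntervalIntegrable (fun t => (h' t + α t *ᵥ h t) ⬝ᵥ v t) MeasureTheory.volume 0 1 := by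
    rw [hintegrand]; exact hint1.add hint2
  have hderiv : ∀ t ∈ Set.Ioo (0:ℝ) 1,
      HasDerivWithinAt F ((h' t + α t *ᵥ h t) ⬝ᵥ v t) (Set.Ioi t) t := by
    intro t ht
    apply (hFd t ⟨ht.1.le, ht.2.le⟩).mono_of_mem_nhdsWithin
    rw [mem_nhdsWithin]
    exact ⟨Set.Iio 1, isOpen_Iio, ht.2, fun s hs => ⟨(ht.1.trans hs.2).le, hs.1.le⟩⟩
  have hFTC := intervalIntegral.integral_eq_sub_of_hasDeriv_right_of_le zero_le_one hFc hderiv hint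
  rw [hFTC]
  have hF0 : F 0 = 0 := by rw [hF]; simp [hh0]
  have hF1 : F 1 = h 1 ⬝ᵥ a := by
    rw [hF]
    simp only
    congr 1
    rw [hv]
    simp only
    rw [← Matrix.nonsing_inv_eq_ringInverse, hφapp, hc, hstar, Matrix.mulVec_mulVec,
      ← Matrix.transpose_mul, Matrix.mul_nonsing_inv _ (hDet 1 ⟨zero_le_one, le_refl 1⟩),
      Matrix.transpose_one, Matrix.one_mulVec]
  rw [hF0, hF1, sub_zero]
end

section
/- With notation as in the preceding lemma (α continuous, S' + αS = 0, S(0) = I, α-inner product on H(ℝ^d)), for any a ∈ ℝ^d the path h(t) := S(t)(∫₀ᵗ (S(s)*S(s))⁻¹ ds)(∫₀¹ (S(s)*S(s))⁻¹ ds)⁻¹ S(1)⁻¹ a satisfies h(1) = a and ‖h‖_α = inf{‖k‖_α : k ∈ H(ℝ^d), k(1) = a}; i.e., h is the unique minimal α-norm element of H(ℝ^d) with endpoint a. -/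
open Matrix
open scoped Matrix.Norms.L2Operator

open Set MeasureTheory intervalIntegral

set_option maxHeartbeats 1000000

noncomputable def mvCLM (d : ℕ) : Matrix (Fin d) (Fin d) ℝ →L[ℝ] (Fin d → ℝ) →L[ℝ] (Fin d → ℝ) :=
  LinearMap.toContinuousLinearMap
  { toFun := fun M => LinearMap.toContinuousLinearMap (Matrix.mulVecLin M)
    map_add' := by intro M N; ext v i; simp [Matrix.add_mulVec]
    map_smul' := by intro c M; ext v i; simp [Matrix.smul_mulVec] }

@[simp] lemma mvCLM_apply {d : ℕ} (M : Matrix (Fin d) (Fin d) ℝ) (v : Fin d → ℝ) :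
    mvCLM d M v = M *ᵥ v := rfl

noncomputable def dpCLM (d : ℕ) (w : Fin d → ℝ) : (Fin d → ℝ) →L[ℝ] ℝ :=
  LinearMap.toContinuousLinearMap
  { toFun := fun v => w ⬝ᵥ v
    map_add' := by intro x y; simp [dotProduct_add]
    map_smul' := by intro c x; simp [dotProduct_smul] }

@[simp] lemma dpCLM_apply {d : ℕ} (w v : Fin d → ℝ) : dpCLM d w v = w ⬝ᵥ v := rfl

lemma HasDerivWithinAt.mulVec2 {d : ℕ} {M : ℝ → Matrix (Fin d) (Fin d) ℝ}
    {x : ℝ → Fin d → ℝ} {M' : Matrix (Fin d) (Fin d) ℝ} {x' : Fin d → ℝ} {s : Set ℝ} {t : ℝ}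
    (hM : HasDerivWithinAt M M' s t) (hx : HasDerivWithinAt x x' s t) :
    HasDerivWithinAt (fun τ => M τ *ᵥ x τ) (M' *ᵥ x t + M t *ᵥ x') s t := by
  have h1 : HasDerivWithinAt (fun τ => mvCLM d (M τ)) (mvCLM d M') s t :=
    (mvCLM d).hasFDerivAt.comp_hasDerivWithinAt t hM
  simpa using h1.clm_apply hx

lemma dot_abs_le {d : ℕ} (x y : Fin d → ℝ) : |x ⬝ᵥ y| ≤ (x ⬝ᵥ x + y ⬝ᵥ y) / 2 := by
  have h1 : |x ⬝ᵥ y| ≤ ∑ i, |x i * y i| := by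
    simpa [dotProduct] using Finset.abs_sum_le_sum_abs (fun i => x i * y i) Finset.univ
  have h2 : ∀ i : Fin d, |x i * y i| ≤ (x i * x i + y i * y i) / 2 := by
    intro i
    have := abs_mul (x i) (y i)
    nlinarith [sq_nonneg (|x i| - |y i|), sq_abs (x i), sq_abs (y i), abs_nonneg (x i * y i)]
  calc |x ⬝ᵥ y| ≤ ∑ i, |x i * y i| := h1
    _ ≤ ∑ i, (x i * x i + y i * y i) / 2 := Finset.sum_le_sum fun i _ => h2 i
    _ = (x ⬝ᵥ x + y ⬝ᵥ y) / 2 := by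
        simp only [dotProduct]; rw [← Finset.sum_add_distrib, Finset.sum_div]

lemma dot_self_nonneg {d : ℕ} (x : Fin d → ℝ) : 0 ≤ x ⬝ᵥ x :=
  Finset.sum_nonneg fun i _ => mul_self_nonneg (x i)

section helpers
variable {E : Type*} [NormedAddCommGroup E] [NormedSpace ℝ E]

lemma hdwa_Iic {f : ℝ → E} {f' : E} {τ : ℝ}
    (h : HasDerivWithinAt f f' (Icc (0:ℝ) 1) τ) (h0 : 0 < τ) (h1 : τ ≤ 1) :
    HasDerivWithinAt f f' (Iic τ) τ := by
  have hsub : Ioc (0:ℝ) τ ⊆ Icc 0 1 := fun x hx => ⟨hx.1.le, hx.2.trans h1⟩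
  refine (h.mono hsub).mono_of_mem_nhdsWithin ?_
  have : Ioc (0:ℝ) τ = Iic τ ∩ Ioi 0 := by ext x; simp [and_comm]
  rw [this]
  exact Filter.inter_mem self_mem_nhdsWithin
    (mem_nhdsWithin_of_mem_nhds (Ioi_mem_nhds h0))

lemma hdwa_Ici {f : ℝ → E} {f' : E} {τ : ℝ}
    (h : HasDerivWithinAt f f' (Icc (0:ℝ) 1) τ) (h0 : 0 ≤ τ) (h1 : τ < 1) :
    HasDerivWithinAt f f' (Ici τ) τ := by
  have hsub : Ico τ (1:ℝ) ⊆ Icc 0 1 := fun x hx => ⟨h0.trans hx.1, hx.2.le⟩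
  refine (h.mono hsub).mono_of_mem_nhdsWithin ?_
  have : Ico τ (1:ℝ) = Ici τ ∩ Iio 1 := rfl
  rw [this]
  exact Filter.inter_mem self_mem_nhdsWithin
    (mem_nhdsWithin_of_mem_nhds (Iio_mem_nhds h1))

lemma hdwa_interior {f : ℝ → E} {f' : E} {τ : ℝ}
    (h : HasDerivWithinAt f f' (Icc (0:ℝ) 1) τ) (h0 : 0 < τ) (h1 : τ < 1) :
    HasDerivAt f f' τ :=
  h.hasDerivAt (Icc_mem_nhds h0 h1)

/-- FTC: derivative of `u ↦ ∫_0^u G` within `Icc 0 1` for `G` continuous on `Icc 0 1`. -/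
lemma hasDerivWithinAt_primitive_of_continuousOn [CompleteSpace E] {G : ℝ → E}
    (hG : ContinuousOn G (Icc (0:ℝ) 1)) {b : ℝ} (hb : b ∈ Icc (0:ℝ) 1) :
    HasDerivWithinAt (fun u => ∫ s in (0:ℝ)..u, G s) (G b) (Icc (0:ℝ) 1) b := by
  haveI : Fact (b ∈ Icc (0:ℝ) 1) := ⟨hb⟩
  have hint : IntervalIntegrable G volume 0 b := by
    apply ContinuousOn.intervalIntegrable
    apply hG.mono
    rw [uIcc_of_le hb.1]
    exact fun x hx => ⟨hx.1, hx.2.trans hb.2⟩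
  have hmeas : StronglyMeasurableAtFilter G (nhdsWithin b (Icc (0:ℝ) 1)) volume :=
    ⟨Icc 0 1, self_mem_nhdsWithin, hG.aestronglyMeasurable measurableSet_Icc⟩
  exact intervalIntegral.integral_hasDerivWithinAt_right hint hmeas (hG b hb)

end helpers

section ode

variable {d : ℕ} {α S : ℝ → Matrix (Fin d) (Fin d) ℝ}

lemma S_contOn (hS : ∀ t ∈ Icc (0:ℝ) 1, HasDerivWithinAt S (-(α t * S t)) (Icc (0:ℝ) 1) t) :
    ContinuousOn S (Icc (0:ℝ) 1) := fun t ht => (hS t ht).continuousWithinAt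

lemma S_isUnit (hα : ContinuousOn α (Icc (0:ℝ) 1))
    (hS : ∀ t ∈ Icc (0:ℝ) 1, HasDerivWithinAt S (-(α t * S t)) (Icc (0:ℝ) 1) t)
    (hS0 : S 0 = 1) : ∀ t ∈ Icc (0:ℝ) 1, IsUnit (S t) := by
  -- bound on the operator norms of α
  obtain ⟨C, hC⟩ : ∃ C, ∀ t ∈ Icc (0:ℝ) 1, ‖mvCLM d (α t)‖ ≤ C :=
    isCompact_Icc.exists_bound_of_continuousOn ((mvCLM d).continuous.comp_continuousOn hα)
  set K : NNReal := C.toNNReal with hK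
  set clamp : ℝ → ℝ := fun t => max 0 (min t 1) with hclamp
  have hclamp_mem : ∀ t, clamp t ∈ Icc (0:ℝ) 1 :=
    fun t => ⟨le_max_left _ _, max_le (by norm_num) (min_le_right _ _)⟩
  have hclamp_eq : ∀ t ∈ Icc (0:ℝ) 1, clamp t = t := fun t ht => by
    simp [hclamp, min_eq_left ht.2, max_eq_right ht.1]
  set vf : ℝ → (Fin d → ℝ) → (Fin d → ℝ) := fun t x => -(α (clamp t) *ᵥ x) with hvf
  have hv : ∀ t, LipschitzOnWith K (vf t) univ := by
    intro t
    rw [lipschitzOnWith_univ]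
    have : vf t = fun x => (-(mvCLM d (α (clamp t)))) x := by
      funext x; simp [hvf]
    rw [this]
    refine ((-(mvCLM d (α (clamp t)))).lipschitz).weaken ?_
    rw [← NNReal.coe_le_coe]
    simp only [coe_nnnorm, norm_neg]
    exact le_trans (hC _ (hclamp_mem t)) (Real.le_coe_toNNReal C)
  intro t₀ ht₀
  rw [← Matrix.mulVec_injective_iff_isUnit]
  have key : ∀ u : Fin d → ℝ, S t₀ *ᵥ u = 0 → u = 0 := by
    intro u hu
    set x : ℝ → Fin d → ℝ := fun τ => S τ *ᵥ u with hx
    have hxc : ContinuousOn x (Icc 0 t₀) := by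
      have : ContinuousOn S (Icc 0 t₀) :=
        (S_contOn hS).mono (Icc_subset_Icc_right ht₀.2)
      exact ((mvCLM d).flip u).continuous.comp_continuousOn this
    have hx' : ∀ τ ∈ Ioc (0:ℝ) t₀, HasDerivWithinAt x (vf τ (x τ)) (Iic τ) τ := by
      intro τ hτ
      have hτ1 : τ ∈ Icc (0:ℝ) 1 := ⟨hτ.1.le, hτ.2.trans ht₀.2⟩
      have hd : HasDerivWithinAt x ((-(α τ * S τ)) *ᵥ u) (Icc (0:ℝ) 1) τ :=
        ((mvCLM d).flip u).hasFDerivAt.comp_hasDerivWithinAt τ (hS τ hτ1)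
      have heq : (-(α τ * S τ)) *ᵥ u = vf τ (x τ) := by
        simp [hvf, hx, Matrix.neg_mulVec, Matrix.mulVec_mulVec, hclamp_eq τ hτ1]
      exact hdwa_Iic (heq ▸ hd) hτ.1 hτ1.2
    have hg' : ∀ τ ∈ Ioc (0:ℝ) t₀,
        HasDerivWithinAt (fun _ : ℝ => (0 : Fin d → ℝ)) (vf τ 0) (Iic τ) τ := by
      intro τ hτ
      have : vf τ (0 : Fin d → ℝ) = 0 := by simp [hvf]
      rw [this]
      exact hasDerivWithinAt_const _ _ _
    have := ODE_solution_unique_of_mem_Icc_left (fun t _ => hv t) hxc hx' (fun _ _ => trivial)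
      continuousOn_const hg' (fun _ _ => trivial) (by simpa [hx] using hu)
    have h0 := this (left_mem_Icc.2 ht₀.1)
    simpa [hx, hS0] using h0
  intro u w huw
  have : S t₀ *ᵥ (u - w) = 0 := by
    rw [Matrix.mulVec_sub, huw, sub_self]
  have := key _ this
  exact sub_eq_zero.mp this

end ode

section meas

variable {d : ℕ}

lemma aesm_dot {u v : ℝ → Fin d → ℝ} {μ : Measure ℝ}
    (hu : AEStronglyMeasurable u μ) (hv : AEStronglyMeasurable v μ) :
    AEStronglyMeasurable (fun t => u t ⬝ᵥ v t) μ := by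
  have : (fun t => u t ⬝ᵥ v t) = fun t => ∑ i, u t i * v t i := by
    funext t; rfl
  rw [this]
  apply Finset.aestronglyMeasurable_fun_sum
  intro i _
  exact (((continuous_apply i).comp_aestronglyMeasurable hu)).mul
    ((continuous_apply i).comp_aestronglyMeasurable hv)

lemma dot_integrable {u v : ℝ → Fin d → ℝ} {s : Set ℝ}
    (hu : AEStronglyMeasurable u (volume.restrict s))
    (hv : AEStronglyMeasurable v (volume.restrict s))
    (huu : IntegrableOn (fun t => u t ⬝ᵥ u t) s volume)
    (hvv : IntegrableOn (fun t => v t ⬝ᵥ v t) s volume) :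
    IntegrableOn (fun t => u t ⬝ᵥ v t) s volume := by
  refine Integrable.mono' ((huu.add hvv).div_const 2) (aesm_dot hu hv) ?_
  filter_upwards with t
  simpa [Real.norm_eq_abs] using dot_abs_le (u t) (v t)

lemma dot_expand_add (x y : Fin d → ℝ) :
    (x + y) ⬝ᵥ (x + y) = x ⬝ᵥ x + 2 * (x ⬝ᵥ y) + y ⬝ᵥ y := by
  simp [add_dotProduct, dotProduct_add, dotProduct_comm y x]
  ring

lemma dot_expand_sub (x y : Fin d → ℝ) :
    (x - y) ⬝ᵥ (x - y) = x ⬝ᵥ x - 2 * (x ⬝ᵥ y) + y ⬝ᵥ y := by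
  simp [sub_dotProduct, dotProduct_sub, dotProduct_comm y x]
  ring

lemma mulVec_dot (M : Matrix (Fin d) (Fin d) ℝ) (w x : Fin d → ℝ) :
    (M *ᵥ w) ⬝ᵥ x = w ⬝ᵥ (Mᵀ *ᵥ x) := by
  rw [dotProduct_comm, Matrix.dotProduct_mulVec, ← Matrix.mulVec_transpose,
    dotProduct_comm]

/-- The within-`Icc` derivative is a.e. strongly measurable on `Ioc 0 1`. -/
lemma k'_aesm {k k' : ℝ → Fin d → ℝ}
    (hk : ∀ t ∈ Icc (0:ℝ) 1, HasDerivWithinAt k (k' t) (Icc (0:ℝ) 1) t) :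
    AEStronglyMeasurable k' (volume.restrict (Ioc (0:ℝ) 1)) := by
  set kt : ℝ → Fin d → ℝ := fun t => k (max 0 (min t 1)) with hkt
  refine ⟨fun t => derivWithin kt (Ici t) t,
    stronglyMeasurable_derivWithin_Ici kt, ?_⟩
  have hIco : ∀ t ∈ Ico (0:ℝ) 1, derivWithin kt (Ici t) t = k' t := by
    intro t ht
    have h1 : HasDerivWithinAt k (k' t) (Icc t 1) t :=
      (hk t ⟨ht.1, ht.2.le⟩).mono (Icc_subset_Icc_left ht.1)
    have h2 : HasDerivWithinAt kt (k' t) (Icc t 1) t := by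
      refine h1.congr (fun y hy => ?_) ?_
      · simp [hkt, min_eq_left (hy.2 : y ≤ 1), max_eq_right (ht.1.trans hy.1)]
      · simp [hkt, min_eq_left ht.2.le, max_eq_right ht.1]
    have h3 : HasDerivWithinAt kt (k' t) (Ici t) t := by
      refine h2.mono_of_mem_nhdsWithin ?_
      have : Icc t 1 = Ici t ∩ Iic 1 := rfl
      rw [this]
      exact Filter.inter_mem self_mem_nhdsWithin
        (mem_nhdsWithin_of_mem_nhds (Iic_mem_nhds ht.2))
    exact h3.derivWithin (uniqueDiffOn_Ici t t Set.self_mem_Ici)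
  have hne : ∀ᵐ t ∂volume.restrict (Ioc (0:ℝ) 1), t ≠ 1 := by
    refine ae_restrict_of_ae ?_
    rw [MeasureTheory.ae_iff]
    have : {t : ℝ | ¬ t ≠ 1} = {1} := by ext t; simp
    rw [this]
    exact measure_singleton 1
  have hmem : ∀ᵐ t ∂volume.restrict (Ioc (0:ℝ) 1), t ∈ Ioc (0:ℝ) 1 :=
    ae_restrict_mem measurableSet_Ioc
  filter_upwards [hne, hmem] with t h1 h2
  exact (hIco t ⟨h2.1.le, lt_of_le_of_ne h2.2 h1⟩).symm

lemma contOn_dot {u v : ℝ → Fin d → ℝ} {s : Set ℝ}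
    (hu : ContinuousOn u s) (hv : ContinuousOn v s) :
    ContinuousOn (fun t => u t ⬝ᵥ v t) s := by
  have : (fun t => u t ⬝ᵥ v t) = fun t => ∑ i, u t i * v t i := by funext t; rfl
  rw [this]
  apply continuousOn_finset_sum
  intro i _
  exact (((continuous_apply i).comp_continuousOn hu)).mul
    ((continuous_apply i).comp_continuousOn hv)

end meas

/-- The path `h t = S t (∫₀ᵗ (SᴴS)⁻¹)(∫₀¹ (SᴴS)⁻¹)⁻¹ S(1)⁻¹ a` has endpoint `a` and is the
unique element of minimal `α`-norm among Cameron–Martin paths with endpoint `a`. -/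
theorem stmt6 {d : ℕ} (α S : ℝ → Matrix (Fin d) (Fin d) ℝ) (a : Fin d → ℝ)
    (hα : ContinuousOn α (Set.Icc (0 : ℝ) 1))
    (hS : ∀ t ∈ Set.Icc (0 : ℝ) 1,
      HasDerivWithinAt S (-(α t * S t)) (Set.Icc (0 : ℝ) 1) t)
    (hS0 : S 0 = 1)
    (h h' : ℝ → Fin d → ℝ)
    (hdef : h = fun t => S t *ᵥ ((∫ s in (0 : ℝ)..t, ((S s)ᴴ * S s)⁻¹) *ᵥ
      ((∫ s in (0 : ℝ)..1, ((S s)ᴴ * S s)⁻¹)⁻¹ *ᵥ ((S 1)⁻¹ *ᵥ a))))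
    (hh' : ∀ t ∈ Set.Icc (0 : ℝ) 1, HasDerivWithinAt h (h' t) (Set.Icc (0 : ℝ) 1) t) :
    h 1 = a ∧
      (∀ k k' : ℝ → Fin d → ℝ, k 0 = 0 →
        (∀ t ∈ Set.Icc (0 : ℝ) 1, HasDerivWithinAt k (k' t) (Set.Icc (0 : ℝ) 1) t) →
        IntervalIntegrable (fun t => (k' t) ⬝ᵥ (k' t)) MeasureTheory.volume 0 1 →
        k 1 = a →
        (∫ t in (0 : ℝ)..1, (h' t + α t *ᵥ h t) ⬝ᵥ (h' t + α t *ᵥ h t)) ≤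
            ∫ t in (0 : ℝ)..1, (k' t + α t *ᵥ k t) ⬝ᵥ (k' t + α t *ᵥ k t) ∧
          ((∫ t in (0 : ℝ)..1, (k' t + α t *ᵥ k t) ⬝ᵥ (k' t + α t *ᵥ k t)) =
              (∫ t in (0 : ℝ)..1, (h' t + α t *ᵥ h t) ⬝ᵥ (h' t + α t *ᵥ h t)) →
            ∀ t ∈ Set.Icc (0 : ℝ) 1, k t = h t)) := by
  have h01 : (0:ℝ) ≤ 1 := zero_le_one
  have hI0 : (0:ℝ) ∈ Icc (0:ℝ) 1 := ⟨le_rfl, h01⟩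
  have hI1 : (1:ℝ) ∈ Icc (0:ℝ) 1 := ⟨h01, le_rfl⟩
  have hSu : ∀ t ∈ Icc (0:ℝ) 1, IsUnit (S t) := S_isUnit hα hS hS0
  have hSd : ∀ t ∈ Icc (0:ℝ) 1, IsUnit (S t).det :=
    fun t ht => (Matrix.isUnit_iff_isUnit_det _).mp (hSu t ht)
  have hScont : ContinuousOn S (Icc (0:ℝ) 1) := S_contOn hS
  set G : ℝ → Matrix (Fin d) (Fin d) ℝ := fun t => ((S t)ᴴ * S t)⁻¹ with hGdef
  have hGsym : ∀ t, (G t)ᵀ = G t := by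
    intro t
    simp only [hGdef, Matrix.conjTranspose_eq_transpose_of_trivial,
      Matrix.transpose_nonsing_inv, Matrix.transpose_mul, Matrix.transpose_transpose]
  have hPu : ∀ t ∈ Icc (0:ℝ) 1, IsUnit ((S t)ᴴ * S t) := by
    intro t ht
    have h1 : IsUnit ((S t)ᴴ) := by
      rw [Matrix.isUnit_iff_isUnit_det, Matrix.conjTranspose_eq_transpose_of_trivial,
        Matrix.det_transpose]
      exact hSd t ht
    exact h1.mul (hSu t ht)
  have hGcont : ContinuousOn G (Icc (0:ℝ) 1) := by
    have hctC : Continuous (fun M : Matrix (Fin d) (Fin d) ℝ => Mᵀ) :=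
      LinearMap.continuous_of_finiteDimensional
        ({ toFun := fun M => Mᵀ
           map_add' := fun M N => Matrix.transpose_add M N
           map_smul' := fun c M => Matrix.transpose_smul c M } :
          Matrix (Fin d) (Fin d) ℝ →ₗ[ℝ] Matrix (Fin d) (Fin d) ℝ)
    have hmul : ContinuousOn (fun t => (S t)ᴴ * S t) (Icc (0:ℝ) 1) := by
      have : ContinuousOn (fun t => (S t)ᴴ) (Icc (0:ℝ) 1) := by
        have := hctC.comp_continuousOn hScont
        refine this.congr fun t _ => ?_
        simp [Matrix.conjTranspose_eq_transpose_of_trivial]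
      exact this.mul hScont
    intro t ht
    have hinv : ContinuousAt Ring.inverse ((S t)ᴴ * S t) := by
      have := NormedRing.inverse_continuousAt (hPu t ht).unit
      rwa [(hPu t ht).unit_spec] at this
    have hcw : ContinuousWithinAt (fun τ => Ring.inverse ((S τ)ᴴ * S τ)) (Icc (0:ℝ) 1) t := by
      exact ContinuousAt.comp_continuousWithinAt (f := fun τ => (S τ)ᴴ * S τ) hinv (hmul t ht)
    refine hcw.congr (fun τ _ => ?_) ?_ <;>
      simp [hGdef, Matrix.nonsing_inv_eq_ringInverse]
  have hGpos : ∀ t ∈ Icc (0:ℝ) 1, ∀ v : Fin d → ℝ, v ≠ 0 → 0 < v ⬝ᵥ (G t *ᵥ v) := by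
    intro t ht v hv
    have hPd : IsUnit ((S t)ᴴ * S t).det := (Matrix.isUnit_iff_isUnit_det _).mp (hPu t ht)
    set y : Fin d → ℝ := G t *ᵥ v with hy
    have hvy : v = ((S t)ᴴ * S t) *ᵥ y := by
      rw [hy, Matrix.mulVec_mulVec, Matrix.mul_nonsing_inv _ hPd, Matrix.one_mulVec]
    set z : Fin d → ℝ := S t *ᵥ y with hz
    have hvz : v = (S t)ᴴ *ᵥ z := by
      rw [hz, Matrix.mulVec_mulVec]
      exact hvy
    have hzne : z ≠ 0 := by
      intro hz0
      apply hv
      rw [hvz, hz0, Matrix.mulVec_zero]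
    have hcalc : v ⬝ᵥ y = z ⬝ᵥ z := by
      calc v ⬝ᵥ y = ((S t)ᴴ *ᵥ z) ⬝ᵥ y := by rw [← hvz]
        _ = z ⬝ᵥ (((S t)ᴴ)ᵀ *ᵥ y) := mulVec_dot _ _ _
        _ = z ⬝ᵥ (S t *ᵥ y) := by
            rw [Matrix.conjTranspose_eq_transpose_of_trivial, Matrix.transpose_transpose]
        _ = z ⬝ᵥ z := by rw [← hz]
    rw [hcalc]
    rcases (dot_self_nonneg z).lt_or_eq with hlt | heq0
    · exact hlt
    · exact absurd (dotProduct_self_eq_zero.mp heq0.symm) hzne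
  set A : ℝ → Matrix (Fin d) (Fin d) ℝ := fun t => ∫ s in (0:ℝ)..t, G s with hAdef
  have hA' : ∀ t ∈ Icc (0:ℝ) 1, HasDerivWithinAt A (G t) (Icc (0:ℝ) 1) t :=
    fun t ht => hasDerivWithinAt_primitive_of_continuousOn hGcont ht
  have hGint : IntervalIntegrable G volume 0 1 := by
    apply ContinuousOn.intervalIntegrable
    rwa [uIcc_of_le h01]
  have hA1u : IsUnit (A 1) := by
    have hlin : ∀ v : Fin d → ℝ, v ⬝ᵥ (A 1 *ᵥ v) = ∫ t in (0:ℝ)..1, v ⬝ᵥ (G t *ᵥ v) := by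
      intro v
      have := ((dpCLM d v).comp ((mvCLM d).flip v)).intervalIntegral_comp_comm hGint
      simpa [hAdef] using this.symm
    have hpos : ∀ v : Fin d → ℝ, v ≠ 0 → 0 < v ⬝ᵥ (A 1 *ᵥ v) := by
      intro v hv
      rw [hlin v]
      apply intervalIntegral.intervalIntegral_pos_of_pos_on
      · exact (((dpCLM d v).comp ((mvCLM d).flip v)).continuous.comp_continuousOn
          (hGcont.mono (by rw [uIcc_of_le h01]))).intervalIntegrable
      · exact fun x hx => hGpos x ⟨hx.1.le, hx.2.le⟩ v hv
      · exact zero_lt_one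
    rw [← Matrix.mulVec_injective_iff_isUnit]
    intro u u' huu
    by_contra hne
    have hsub : A 1 *ᵥ (u - u') = 0 := by rw [Matrix.mulVec_sub, huu, sub_self]
    have := hpos (u - u') (sub_ne_zero.mpr (fun hh => hne (by rw [hh])))
    rw [hsub, dotProduct_zero] at this
    exact lt_irrefl 0 this
  have hA1d : IsUnit (A 1).det := (Matrix.isUnit_iff_isUnit_det _).mp hA1u
  set w : Fin d → ℝ := (A 1)⁻¹ *ᵥ ((S 1)⁻¹ *ᵥ a) with hwdef
  have hdef' : h = fun t => (S t * A t) *ᵥ w := by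
    rw [hdef]; funext t; rw [Matrix.mulVec_mulVec]
  have hend : h 1 = a := by
    rw [hdef']
    show (S 1 * A 1) *ᵥ w = a
    rw [hwdef, Matrix.mulVec_mulVec, Matrix.mulVec_mulVec, mul_assoc (S 1),
      Matrix.mul_nonsing_inv _ hA1d, mul_one, Matrix.mul_nonsing_inv _ (hSd 1 hI1),
      Matrix.one_mulVec]
  have h0 : h 0 = 0 := by
    rw [hdef']
    show (S 0 * A 0) *ᵥ w = 0
    have hA0 : A 0 = 0 := intervalIntegral.integral_same
    rw [hA0, mul_zero, Matrix.zero_mulVec]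
  clear_value w
  set φ : ℝ → Fin d → ℝ := fun t => (S t * G t) *ᵥ w with hφdef
  have hφcont : ContinuousOn φ (Icc (0:ℝ) 1) :=
    ((mvCLM d).flip w).continuous.comp_continuousOn (hScont.mul hGcont)
  have hφh : ∀ t ∈ Icc (0:ℝ) 1, h' t + α t *ᵥ h t = φ t := by
    intro t ht
    have hM : HasDerivWithinAt (fun τ => S τ * A τ) (-(α t * S t) * A t + S t * G t)
        (Icc (0:ℝ) 1) t := (hS t ht).mul (hA' t ht)
    have hh2 : HasDerivWithinAt h ((-(α t * S t) * A t + S t * G t) *ᵥ w) (Icc (0:ℝ) 1) t := by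
      rw [hdef']
      exact ((mvCLM d).flip w).hasFDerivAt.comp_hasDerivWithinAt t hM
    have hune : h' t = (-(α t * S t) * A t + S t * G t) *ᵥ w := by
      have u1 := (hh' t ht).derivWithin (uniqueDiffOn_Icc zero_lt_one t ht)
      have u2 := hh2.derivWithin (uniqueDiffOn_Icc zero_lt_one t ht)
      rw [← u1, ← u2]
    rw [hune, hdef']
    show (-(α t * S t) * A t + S t * G t) *ᵥ w + α t *ᵥ ((S t * A t) *ᵥ w) = (S t * G t) *ᵥ w
    rw [Matrix.mulVec_mulVec, ← Matrix.add_mulVec]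
    have hmat : -(α t * S t) * A t + S t * G t + α t * (S t * A t) = S t * G t := by
      noncomm_ring
    rw [hmat]
  set T : ℝ → Matrix (Fin d) (Fin d) ℝ := fun t => (S t)⁻¹ with hTdef
  have hST : ∀ t ∈ Icc (0:ℝ) 1, S t * T t = 1 :=
    fun t ht => Matrix.mul_nonsing_inv _ (hSd t ht)
  have hTd : ∀ t ∈ Icc (0:ℝ) 1, HasDerivWithinAt T (T t * α t) (Icc (0:ℝ) 1) t := by
    intro t ht
    have hu := hSu t ht
    have hfd : HasFDerivAt (Ring.inverse : Matrix (Fin d) (Fin d) ℝ → _)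
        (-ContinuousLinearMap.mulLeftRight ℝ _ ↑hu.unit⁻¹ ↑hu.unit⁻¹) (S t) := by
      have := hasFDerivAt_ringInverse (𝕜 := ℝ) hu.unit
      rwa [hu.unit_spec] at this
    have h1 := hfd.comp_hasDerivWithinAt t (hS t ht)
    have hb : (↑hu.unit⁻¹ : Matrix (Fin d) (Fin d) ℝ) = (S t)⁻¹ := by
      rw [← Ring.inverse_unit hu.unit, hu.unit_spec, ← Matrix.nonsing_inv_eq_ringInverse]
    have hval : (-(ContinuousLinearMap.mulLeftRight ℝ (Matrix (Fin d) (Fin d) ℝ)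
        ↑hu.unit⁻¹ ↑hu.unit⁻¹)) (-(α t * S t)) = T t * α t := by
      rw [ContinuousLinearMap.neg_apply, ContinuousLinearMap.mulLeftRight_apply, hb]
      have hTt : T t = (S t)⁻¹ := rfl
      rw [hTt]
      calc -((S t)⁻¹ * -(α t * S t) * (S t)⁻¹)
          = (S t)⁻¹ * α t * (S t * (S t)⁻¹) := by noncomm_ring
        _ = (S t)⁻¹ * α t := by rw [Matrix.mul_nonsing_inv _ (hSd t ht), mul_one]
    rw [← hval]
    refine h1.congr (fun y _ => ?_) ?_ <;>
      exact Matrix.nonsing_inv_eq_ringInverse (S _)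
  have hdot : ∀ t ∈ Icc (0:ℝ) 1, ∀ x : Fin d → ℝ, φ t ⬝ᵥ x = w ⬝ᵥ (T t *ᵥ x) := by
    intro t ht x
    have htr : (S t * G t)ᵀ = T t := by
      rw [Matrix.transpose_mul, hGsym t, hTdef]
      show G t * (S t)ᵀ = (S t)⁻¹
      rw [hGdef]
      show ((S t)ᴴ * S t)⁻¹ * (S t)ᵀ = (S t)⁻¹
      rw [Matrix.conjTranspose_eq_transpose_of_trivial, Matrix.mul_inv_rev, mul_assoc,
        Matrix.nonsing_inv_mul _ (by rw [Matrix.det_transpose]; exact hSd t ht), mul_one]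
    show ((S t * G t) *ᵥ w) ⬝ᵥ x = w ⬝ᵥ (T t *ᵥ x)
    rw [mulVec_dot, htr]
  -- the key FTC identity
  have key : ∀ k k' : ℝ → Fin d → ℝ, k 0 = 0 →
      (∀ t ∈ Icc (0:ℝ) 1, HasDerivWithinAt k (k' t) (Icc (0:ℝ) 1) t) →
      IntervalIntegrable (fun t => φ t ⬝ᵥ (k' t + α t *ᵥ k t)) volume 0 1 →
      ∫ t in (0:ℝ)..1, φ t ⬝ᵥ (k' t + α t *ᵥ k t) = w ⬝ᵥ (T 1 *ᵥ k 1) := by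
    intro k k' hk0 hk' hint
    set ψ : ℝ → ℝ := fun t => w ⬝ᵥ (T t *ᵥ k t) with hψ
    have hψd : ∀ t ∈ Icc (0:ℝ) 1,
        HasDerivWithinAt ψ (φ t ⬝ᵥ (k' t + α t *ᵥ k t)) (Icc (0:ℝ) 1) t := by
      intro t ht
      have hmv := (hTd t ht).mulVec2 (hk' t ht)
      have h2 := (dpCLM d w).hasFDerivAt.comp_hasDerivWithinAt t hmv
      have hval : (dpCLM d w) ((T t * α t) *ᵥ k t + T t *ᵥ k' t)
          = φ t ⬝ᵥ (k' t + α t *ᵥ k t) := by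
        rw [hdot t ht]
        simp only [dpCLM_apply]
        congr 1
        rw [Matrix.mulVec_add, ← Matrix.mulVec_mulVec]
        abel
      rw [← hval]
      exact h2
    have hftc := intervalIntegral.integral_eq_sub_of_hasDeriv_right_of_le h01
      (fun t ht => (hψd t ht).continuousWithinAt)
      (fun t ht => ((hψd t ⟨ht.1.le, ht.2.le⟩).hasDerivAt
        (Icc_mem_nhds ht.1 ht.2)).hasDerivWithinAt) hint
    rw [hftc]
    have hψ0 : ψ 0 = 0 := by simp [hψ, hk0, Matrix.mulVec_zero, dotProduct_zero]
    rw [hψ0, sub_zero]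
  -- integrability package for an admissible path
  have util : ∀ k k' : ℝ → Fin d → ℝ,
      (∀ t ∈ Icc (0:ℝ) 1, HasDerivWithinAt k (k' t) (Icc (0:ℝ) 1) t) →
      IntervalIntegrable (fun t => (k' t) ⬝ᵥ (k' t)) volume 0 1 →
      AEStronglyMeasurable (fun t => k' t + α t *ᵥ k t) (volume.restrict (Ioc (0:ℝ) 1)) ∧
      IntegrableOn (fun t => (k' t + α t *ᵥ k t) ⬝ᵥ (k' t + α t *ᵥ k t)) (Ioc (0:ℝ) 1)
        volume := by
    intro k k' hk' hq
    have hkc : ContinuousOn k (Icc (0:ℝ) 1) := fun t ht => (hk' t ht).continuousWithinAt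
    have hcα : ContinuousOn (fun t => α t *ᵥ k t) (Icc (0:ℝ) 1) := by
      have : ContinuousOn (fun t => (mvCLM d (α t)) (k t)) (Icc (0:ℝ) 1) :=
        isBoundedBilinearMap_apply.continuous.comp_continuousOn
          (((mvCLM d).continuous.comp_continuousOn hα).prodMk hkc)
      exact this
    have hk'm : AEStronglyMeasurable k' (volume.restrict (Ioc (0:ℝ) 1)) := k'_aesm hk'
    have hcm : AEStronglyMeasurable (fun t => α t *ᵥ k t) (volume.restrict (Ioc (0:ℝ) 1)) :=
      (hcα.aestronglyMeasurable measurableSet_Icc).mono_measure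
        (Measure.restrict_mono Ioc_subset_Icc_self le_rfl)
    have hq' : IntegrableOn (fun t => (k' t) ⬝ᵥ (k' t)) (Ioc (0:ℝ) 1) volume := by
      rwa [intervalIntegrable_iff, uIoc_of_le h01] at hq
    have hcc : IntegrableOn (fun t => (α t *ᵥ k t) ⬝ᵥ (α t *ᵥ k t)) (Ioc (0:ℝ) 1) volume :=
      ((contOn_dot hcα hcα).integrableOn_Icc).mono_set Ioc_subset_Icc_self
    have hck' : IntegrableOn (fun t => (k' t) ⬝ᵥ (α t *ᵥ k t)) (Ioc (0:ℝ) 1) volume :=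
      dot_integrable hk'm hcm hq' hcc
    refine ⟨hk'm.add hcm, ?_⟩
    have hexp : (fun t => (k' t + α t *ᵥ k t) ⬝ᵥ (k' t + α t *ᵥ k t))
        = fun t => (k' t) ⬝ᵥ (k' t) + 2 * ((k' t) ⬝ᵥ (α t *ᵥ k t))
          + (α t *ᵥ k t) ⬝ᵥ (α t *ᵥ k t) := funext fun t => dot_expand_add _ _
    rw [hexp]
    exact (hq'.add (hck'.const_mul 2)).add hcc
  have hIocIcc : ∀ᵐ t ∂volume.restrict (Ioc (0:ℝ) 1), t ∈ Icc (0:ℝ) 1 :=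
    (ae_restrict_mem measurableSet_Ioc).mono fun t ht => ⟨ht.1.le, ht.2⟩
  have hq_h : IntervalIntegrable (fun t => (h' t) ⬝ᵥ (h' t)) volume 0 1 := by
    rw [intervalIntegrable_iff, uIoc_of_le h01]
    have hconth : ContinuousOn (fun t => α t *ᵥ h t) (Icc (0:ℝ) 1) := by
      have : ContinuousOn h (Icc (0:ℝ) 1) := fun t ht => (hh' t ht).continuousWithinAt
      exact isBoundedBilinearMap_apply.continuous.comp_continuousOn
        (((mvCLM d).continuous.comp_continuousOn hα).prodMk this)
    have hF : IntegrableOn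
        (fun t => (φ t - α t *ᵥ h t) ⬝ᵥ (φ t - α t *ᵥ h t)) (Ioc (0:ℝ) 1) volume :=
      ((contOn_dot (hφcont.sub hconth) (hφcont.sub hconth)).integrableOn_Icc).mono_set
        Ioc_subset_Icc_self
    refine hF.congr ?_
    filter_upwards [hIocIcc] with t ht
    have := hφh t ht
    have hh'eq : h' t = φ t - α t *ᵥ h t := by rw [← this]; abel
    rw [hh'eq]
  obtain ⟨hgm_h, hgg_h⟩ := util h h' hh' hq_h
  have hφφ_int : IntervalIntegrable (fun t => φ t ⬝ᵥ φ t) volume 0 1 := by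
    apply ContinuousOn.intervalIntegrable
    rw [uIcc_of_le h01]
    exact contOn_dot hφcont hφcont
  have congr_ph : ∫ t in (0:ℝ)..1, φ t ⬝ᵥ (h' t + α t *ᵥ h t) = ∫ t in (0:ℝ)..1, φ t ⬝ᵥ φ t := by
    apply intervalIntegral.integral_congr
    intro t ht
    rw [uIcc_of_le h01] at ht
    show φ t ⬝ᵥ (h' t + α t *ᵥ h t) = φ t ⬝ᵥ φ t
    rw [hφh t ht]
  have Wphi : ∫ t in (0:ℝ)..1, φ t ⬝ᵥ φ t = w ⬝ᵥ (T 1 *ᵥ a) := by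
    have hint : IntervalIntegrable (fun t => φ t ⬝ᵥ (h' t + α t *ᵥ h t)) volume 0 1 := by
      rw [intervalIntegrable_iff, uIoc_of_le h01]
      refine (((contOn_dot hφcont hφcont).integrableOn_Icc).mono_set
        Ioc_subset_Icc_self).congr ?_
      filter_upwards [hIocIcc] with t ht
      rw [hφh t ht]
    have := key h h' h0 hh' hint
    rw [← congr_ph, this, hend]
  refine ⟨hend, ?_⟩
  intro k k' hk0 hk' hq hk1
  obtain ⟨hgm, hgg⟩ := util k k' hk' hq
  set g : ℝ → Fin d → ℝ := fun t => k' t + α t *ᵥ k t with hgdef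
  set ph : ℝ → Fin d → ℝ := fun t => h' t + α t *ᵥ h t with hphdef
  set r : ℝ → Fin d → ℝ := fun t => g t - ph t with hrdef
  have hφm : AEStronglyMeasurable φ (volume.restrict (Ioc (0:ℝ) 1)) :=
    (hφcont.aestronglyMeasurable measurableSet_Icc).mono_measure
      (Measure.restrict_mono Ioc_subset_Icc_self le_rfl)
  have hφφ_on : IntegrableOn (fun t => φ t ⬝ᵥ φ t) (Ioc (0:ℝ) 1) volume :=
    ((contOn_dot hφcont hφcont).integrableOn_Icc).mono_set Ioc_subset_Icc_self
  have hphi_g_int : IntervalIntegrable (fun t => φ t ⬝ᵥ g t) volume 0 1 := by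
    rw [intervalIntegrable_iff, uIoc_of_le h01]
    exact dot_integrable hφm hgm hφφ_on hgg
  have hkey_k : ∫ t in (0:ℝ)..1, φ t ⬝ᵥ g t = w ⬝ᵥ (T 1 *ᵥ a) := by
    rw [← hk1]; exact key k k' hk0 hk' hphi_g_int
  have hph_g_int : IntervalIntegrable (fun t => ph t ⬝ᵥ g t) volume 0 1 := by
    rw [intervalIntegrable_iff, uIoc_of_le h01]
    exact dot_integrable hgm_h hgm hgg_h hgg
  have hph_g : ∫ t in (0:ℝ)..1, ph t ⬝ᵥ g t = w ⬝ᵥ (T 1 *ᵥ a) := by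
    have hce : ∫ t in (0:ℝ)..1, ph t ⬝ᵥ g t = ∫ t in (0:ℝ)..1, φ t ⬝ᵥ g t := by
      apply intervalIntegral.integral_congr
      intro t ht
      rw [uIcc_of_le h01] at ht
      show ph t ⬝ᵥ g t = φ t ⬝ᵥ g t
      have : ph t = φ t := hφh t ht
      rw [this]
    rw [hce, hkey_k]
  have hphph : ∫ t in (0:ℝ)..1, ph t ⬝ᵥ ph t = w ⬝ᵥ (T 1 *ᵥ a) := by
    have hce : ∫ t in (0:ℝ)..1, ph t ⬝ᵥ ph t = ∫ t in (0:ℝ)..1, φ t ⬝ᵥ φ t := by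
      apply intervalIntegral.integral_congr
      intro t ht
      rw [uIcc_of_le h01] at ht
      show ph t ⬝ᵥ ph t = φ t ⬝ᵥ φ t
      have : ph t = φ t := hφh t ht
      rw [this]
    rw [hce, Wphi]
  have hgg' : IntervalIntegrable (fun t => g t ⬝ᵥ g t) volume 0 1 := by
    rw [intervalIntegrable_iff, uIoc_of_le h01]; exact hgg
  have hphph' : IntervalIntegrable (fun t => ph t ⬝ᵥ ph t) volume 0 1 := by
    rw [intervalIntegrable_iff, uIoc_of_le h01]; exact hgg_h
  have hexp : (fun t => r t ⬝ᵥ r t)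
      = fun t => g t ⬝ᵥ g t - (ph t ⬝ᵥ g t + ph t ⬝ᵥ g t) + ph t ⬝ᵥ ph t := by
    funext t
    show (g t - ph t) ⬝ᵥ (g t - ph t) = _
    rw [dot_expand_sub, dotProduct_comm (g t) (ph t)]
    ring
  have hrr_int : IntervalIntegrable (fun t => r t ⬝ᵥ r t) volume 0 1 := by
    rw [hexp]
    exact (hgg'.sub (hph_g_int.add hph_g_int)).add hphph'
  have hrr : ∫ t in (0:ℝ)..1, r t ⬝ᵥ r t
      = (∫ t in (0:ℝ)..1, g t ⬝ᵥ g t) - ∫ t in (0:ℝ)..1, ph t ⬝ᵥ ph t := by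
    calc ∫ t in (0:ℝ)..1, r t ⬝ᵥ r t
        = ∫ t in (0:ℝ)..1, (g t ⬝ᵥ g t - (ph t ⬝ᵥ g t + ph t ⬝ᵥ g t) + ph t ⬝ᵥ ph t) := by
          rw [hexp]
      _ = (∫ t in (0:ℝ)..1, (g t ⬝ᵥ g t - (ph t ⬝ᵥ g t + ph t ⬝ᵥ g t)))
            + ∫ t in (0:ℝ)..1, ph t ⬝ᵥ ph t := by
          rw [intervalIntegral.integral_add (hgg'.sub (hph_g_int.add hph_g_int)) hphph']
      _ = (∫ t in (0:ℝ)..1, g t ⬝ᵥ g t) - (∫ t in (0:ℝ)..1, (ph t ⬝ᵥ g t + ph t ⬝ᵥ g t))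
            + ∫ t in (0:ℝ)..1, ph t ⬝ᵥ ph t := by
          rw [intervalIntegral.integral_sub hgg' (hph_g_int.add hph_g_int)]
      _ = (∫ t in (0:ℝ)..1, g t ⬝ᵥ g t)
            - ((∫ t in (0:ℝ)..1, ph t ⬝ᵥ g t) + ∫ t in (0:ℝ)..1, ph t ⬝ᵥ g t)
            + ∫ t in (0:ℝ)..1, ph t ⬝ᵥ ph t := by
          rw [intervalIntegral.integral_add hph_g_int hph_g_int]
      _ = (∫ t in (0:ℝ)..1, g t ⬝ᵥ g t) - ∫ t in (0:ℝ)..1, ph t ⬝ᵥ ph t := by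
          rw [hph_g, hphph]; ring
  have hrr_nonneg : 0 ≤ ∫ t in (0:ℝ)..1, r t ⬝ᵥ r t := by
    apply intervalIntegral.integral_nonneg h01
    intro u _; exact dot_self_nonneg _
  constructor
  · linarith [hrr]
  · intro heq t₀ ht₀
    have hrr0 : ∫ t in (0:ℝ)..1, r t ⬝ᵥ r t = 0 := by rw [hrr, heq]; ring
    have hr0 : ∀ᵐ t ∂volume.restrict (Ioc (0:ℝ) 1), r t = 0 := by
      have hint : IntegrableOn (fun t => r t ⬝ᵥ r t) (Ioc (0:ℝ) 1) volume := by
        rw [intervalIntegrable_iff, uIoc_of_le h01] at hrr_int; exact hrr_int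
      have hI : ∫ t in Ioc (0:ℝ) 1, r t ⬝ᵥ r t = 0 := by
        rwa [intervalIntegral.integral_of_le h01] at hrr0
      have hae0 : (fun t => r t ⬝ᵥ r t) =ᵐ[volume.restrict (Ioc (0:ℝ) 1)] 0 :=
        (MeasureTheory.integral_eq_zero_iff_of_nonneg
          (fun t => dot_self_nonneg (r t)) hint).mp hI
      filter_upwards [hae0] with t ht
      exact dotProduct_self_eq_zero.mp ht
    -- FTC for e = T •ᵥ (k - h) on [0, t₀]
    have hkh : k t₀ = h t₀ := by
      set e : ℝ → Fin d → ℝ := fun t => T t *ᵥ (k t - h t) with hedef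
      have hed : ∀ t ∈ Icc (0:ℝ) 1, HasDerivWithinAt e (T t *ᵥ r t) (Icc (0:ℝ) 1) t := by
        intro t ht
        have hmv := (hTd t ht).mulVec2 ((hk' t ht).sub (hh' t ht))
        have hval : (T t * α t) *ᵥ (k t - h t) + T t *ᵥ (k' t - h' t) = T t *ᵥ r t := by
          show _ = T t *ᵥ ((k' t + α t *ᵥ k t) - (h' t + α t *ᵥ h t))
          simp only [← Matrix.mulVec_mulVec, Matrix.mulVec_sub, Matrix.mulVec_add]
          abel
        rw [← hval]
        exact hmv
      have hr0' : ∀ᵐ t ∂volume.restrict (Ioc (0:ℝ) t₀), r t = 0 :=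
        MeasureTheory.ae_mono (Measure.restrict_mono (Ioc_subset_Ioc_right ht₀.2) le_rfl) hr0
      have he'int : IntervalIntegrable (fun t => T t *ᵥ r t) volume 0 t₀ := by
        rw [intervalIntegrable_iff, uIoc_of_le ht₀.1]
        refine (MeasureTheory.integrable_zero _ _ _).congr ?_
        filter_upwards [hr0'] with t htr
        simp [htr]
      have hcont_e : ContinuousOn e (Icc 0 t₀) := fun t ht =>
        ((hed t ⟨ht.1, ht.2.trans ht₀.2⟩).continuousWithinAt).mono
          (Icc_subset_Icc_right ht₀.2)
      have hftc := intervalIntegral.integral_eq_sub_of_hasDeriv_right_of_le ht₀.1 hcont_e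
        (fun t ht' => ((hed t ⟨ht'.1.le, ht'.2.le.trans ht₀.2⟩).hasDerivAt
          (Icc_mem_nhds ht'.1 (lt_of_lt_of_le ht'.2 ht₀.2))).hasDerivWithinAt) he'int
      have hzero : ∫ t in (0:ℝ)..t₀, T t *ᵥ r t = 0 := by
        rw [intervalIntegral.integral_of_le ht₀.1]
        apply MeasureTheory.integral_eq_zero_of_ae
        filter_upwards [hr0'] with t htr
        simp [htr]
      have he0 : e 0 = 0 := by
        show T 0 *ᵥ (k 0 - h 0) = 0
        rw [hk0, h0, sub_zero, Matrix.mulVec_zero]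
      have het : e t₀ = 0 := by
        have h2 : e t₀ - e 0 = 0 := by rw [← hftc, hzero]
        rwa [he0, sub_zero] at h2
      have hfin : S t₀ *ᵥ e t₀ = k t₀ - h t₀ := by
        show S t₀ *ᵥ (T t₀ *ᵥ (k t₀ - h t₀)) = _
        rw [Matrix.mulVec_mulVec, hST t₀ ht₀, Matrix.one_mulVec]
      rw [het, Matrix.mulVec_zero] at hfin
      exact sub_eq_zero.mp hfin.symm
    exact hkh
end

section
/- Let α : [0,1] → End(ℝ^d) be continuous, and define K : [0,1] → End(ℝ^d) by K_s = T_s (∫₀ˢ T_r⁻¹(T_r⁻¹)* dr) T₁*, where T solves T' + αT = 0, T(0) = I. Then for fixed a ∈ ℝ^d, the path J_s := K_s K₁⁻¹ a satisfies the ODE J'_s = -α(s)J_s + φ_s with J₀ = 0, where φ_s = (T₁T_s⁻¹)* K₁⁻¹ a. -/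
open Matrix
open scoped Matrix.Norms.L2Operator

/-- The continuous-linear-map realization of matrices acting on `Fin d → ℝ`. -/
noncomputable def stmt9Psi (d : ℕ) :
    Matrix (Fin d) (Fin d) ℝ ≃ₗ[ℝ] ((Fin d → ℝ) →L[ℝ] (Fin d → ℝ)) :=
  Matrix.toLin'.trans LinearMap.toContinuousLinearMap

lemma stmt9Psi_apply {d : ℕ} (A : Matrix (Fin d) (Fin d) ℝ) (x : Fin d → ℝ) :
    stmt9Psi d A x = A *ᵥ x := by simp [stmt9Psi]

lemma stmt9Psi_continuous (d : ℕ) : Continuous (stmt9Psi d) :=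
  (stmt9Psi d).toLinearMap.continuous_of_finiteDimensional

/-- Derivative of `t ↦ M t *ᵥ c`. -/
lemma stmt9_hasDeriv_mulVec {d : ℕ} (c : Fin d → ℝ) (M : ℝ → Matrix (Fin d) (Fin d) ℝ)
    (D : Matrix (Fin d) (Fin d) ℝ) (s : Set ℝ) (x : ℝ) (h : HasDerivWithinAt M D s x) :
    HasDerivWithinAt (fun u => M u *ᵥ c) (D *ᵥ c) s x := by
  have h2 := ((ContinuousLinearMap.apply ℝ (Fin d → ℝ) c).comp
      (LinearMap.toContinuousLinearMap (stmt9Psi d).toLinearMap)).hasFDerivAt.comp_hasDerivWithinAt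
      x h
  simpa [Function.comp_def, stmt9Psi_apply] using h2

lemma stmt9_cont_mulVec {d : ℕ} (c : Fin d → ℝ) :
    Continuous (fun A : Matrix (Fin d) (Fin d) ℝ => A *ᵥ c) := by
  have := ((ContinuousLinearMap.apply ℝ (Fin d → ℝ) c).comp
      (LinearMap.toContinuousLinearMap (stmt9Psi d).toLinearMap)).continuous
  exact Continuous.matrix_mulVec continuous_id continuous_const

/-- Invertibility of the fundamental solution via ODE uniqueness. -/
lemma stmt9_isUnit {d : ℕ} (α T : ℝ → Matrix (Fin d) (Fin d) ℝ)
    (hα : ContinuousOn α (Set.Icc (0 : ℝ) 1))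
    (hT : ∀ t ∈ Set.Icc (0 : ℝ) 1,
      HasDerivWithinAt T (-(α t * T t)) (Set.Icc (0 : ℝ) 1) t)
    (hT0 : T 0 = 1) : ∀ s ∈ Set.Icc (0 : ℝ) 1, IsUnit (T s) := by
  have hTc : ContinuousOn T (Set.Icc (0:ℝ) 1) := fun t ht => (hT t ht).continuousWithinAt
  intro s₀ hs₀
  rw [← Matrix.mulVec_injective_iff_isUnit]
  have key : ∀ v : Fin d → ℝ, T s₀ *ᵥ v = 0 → v = 0 := by
    intro v hv0
    obtain ⟨C, hC⟩ := IsCompact.exists_bound_of_continuousOn isCompact_Icc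
        ((stmt9Psi_continuous d).comp_continuousOn hα)
    set g : ℝ → ℝ := fun t => min (max t 0) 1 with hgdef
    have hg_mem : ∀ t, g t ∈ Set.Icc (0:ℝ) 1 := fun t =>
      ⟨le_min (le_max_right _ _) zero_le_one, min_le_right _ _⟩
    have hg_eq : ∀ t ∈ Set.Icc (0:ℝ) 1, g t = t := by
      intro t ht
      simp only [hgdef]
      rw [max_eq_left ht.1, min_eq_left ht.2]
    set F : ℝ → (Fin d → ℝ) → (Fin d → ℝ) := fun t x => (-(stmt9Psi d (α (g t)))) x with hFdef
    have hLip : ∀ t, LipschitzOnWith (Real.toNNReal C) (F t) Set.univ := by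
      intro t
      apply LipschitzWith.lipschitzOnWith
      refine LipschitzWith.weaken ((-(stmt9Psi d (α (g t)))).lipschitz) ?_
      rw [← NNReal.coe_le_coe, coe_nnnorm, Real.coe_toNNReal', norm_neg]
      exact le_max_of_le_left (hC _ (hg_mem t))
    have huniq := ODE_solution_unique_of_mem_Icc_left (v := F) (s := fun _ => Set.univ)
      (K := Real.toNNReal C) (fun t _ => hLip t) (f := fun t => T t *ᵥ v) (g := fun _ => 0)
      (a := 0) (b := s₀)
      ((stmt9_cont_mulVec v).comp_continuousOn (hTc.mono (Set.Icc_subset_Icc_right hs₀.2)))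
      (by
        intro t ht
        have htI : t ∈ Set.Icc (0:ℝ) 1 := ⟨ht.1.le, ht.2.trans hs₀.2⟩
        have h1 := stmt9_hasDeriv_mulVec v T _ _ t (hT t htI)
        have h2 : Set.Icc (0:ℝ) 1 ∈ nhdsWithin t (Set.Iic t) := by
          refine Filter.mem_of_superset (Filter.inter_mem self_mem_nhdsWithin
            (mem_nhdsWithin_of_mem_nhds (isOpen_Ioi.mem_nhds ht.1))) ?_
          rintro x ⟨hx1, hx2⟩
          exact ⟨le_of_lt hx2, le_trans hx1 htI.2⟩
        have h3 := h1.mono_of_mem_nhdsWithin h2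
        have heq : F t (T t *ᵥ v) = (-(α t * T t)) *ᵥ v := by
          simp [hFdef, stmt9Psi_apply, hg_eq t htI, Matrix.mulVec_mulVec, Matrix.neg_mulVec]
        rw [heq]
        exact h3)
      (fun _ _ => Set.mem_univ _)
      continuousOn_const
      (by
        intro t ht
        have : F t 0 = 0 := by simp [hFdef]
        rw [this]
        exact hasDerivWithinAt_const _ _ _)
      (fun _ _ => Set.mem_univ _)
      (by simpa using hv0)
    have h0 := huniq (Set.left_mem_Icc.mpr hs₀.1)
    simpa [hT0, Matrix.one_mulVec] using h0
  intro x y hxy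
  have hsub : T s₀ *ᵥ (x - y) = 0 := by
    rw [Matrix.mulVec_sub, hxy, sub_self]
  exact sub_eq_zero.mp (key _ hsub)

/-- FTC: derivative within `Icc 0 1` of the indefinite integral of a continuous matrix-valued
function. -/
lemma stmt9_ftc {d : ℕ} (f : ℝ → Matrix (Fin d) (Fin d) ℝ)
    (hf : ContinuousOn f (Set.Icc (0:ℝ) 1))
    (s : ℝ) (hs : s ∈ Set.Icc (0:ℝ) 1) :
    HasDerivWithinAt (fun u => ∫ r in (0:ℝ)..u, f r) (f s) (Set.Icc (0:ℝ) 1) s := by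
  have hint : IntervalIntegrable f MeasureTheory.volume 0 s := by
    apply ContinuousOn.intervalIntegrable
    rw [Set.uIcc_of_le hs.1]
    exact hf.mono (Set.Icc_subset_Icc_right hs.2)
  have hmeasIcc : MeasureTheory.AEStronglyMeasurable f
      (MeasureTheory.volume.restrict (Set.Icc (0:ℝ) 1)) :=
    hf.aestronglyMeasurable measurableSet_Icc
  rcases eq_or_lt_of_le hs.1 with h0 | h0
  · subst h0
    have hmem : Set.Icc (0:ℝ) 1 ∈ nhdsWithin (0:ℝ) (Set.Ioi 0) := by
      refine Filter.mem_of_superset (Filter.inter_mem self_mem_nhdsWithin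
        (mem_nhdsWithin_of_mem_nhds (isOpen_Iio.mem_nhds (by norm_num : (0:ℝ) < 1)))) ?_
      rintro x ⟨hx1, hx2⟩
      exact ⟨le_of_lt hx1, le_of_lt hx2⟩
    have hmeas : StronglyMeasurableAtFilter f (nhdsWithin (0:ℝ) (Set.Ioi 0)) :=
      ⟨Set.Icc 0 1, hmem, hmeasIcc⟩
    have hcw : ContinuousWithinAt f (Set.Ioi (0:ℝ)) 0 :=
      (hf 0 hs).mono_of_mem_nhdsWithin hmem
    exact (intervalIntegral.integral_hasDerivWithinAt_right hint hmeas hcw).mono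
      Set.Icc_subset_Ici_self
  rcases eq_or_lt_of_le hs.2 with h1 | h1
  · have hmem : Set.Icc (0:ℝ) 1 ∈ nhdsWithin s (Set.Iic s) := by
      refine Filter.mem_of_superset (Filter.inter_mem self_mem_nhdsWithin
        (mem_nhdsWithin_of_mem_nhds (isOpen_Ioi.mem_nhds h0))) ?_
      rintro x ⟨hx1, hx2⟩
      exact ⟨le_of_lt hx2, le_trans hx1 hs.2⟩
    have hmeas : StronglyMeasurableAtFilter f (nhdsWithin s (Set.Iic s)) :=
      ⟨Set.Icc 0 1, hmem, hmeasIcc⟩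
    have hcw : ContinuousWithinAt f (Set.Iic s) s :=
      (hf s hs).mono_of_mem_nhdsWithin hmem
    have := intervalIntegral.integral_hasDerivWithinAt_right (s := Set.Iic s) hint hmeas hcw
    exact this.mono (h1 ▸ Set.Icc_subset_Iic_self)
  · have hmem : Set.Icc (0:ℝ) 1 ∈ nhds s := Icc_mem_nhds h0 h1
    have hmeas : StronglyMeasurableAtFilter f (nhds s) :=
      ⟨Set.Icc 0 1, hmem, hmeasIcc⟩
    have hca : ContinuousAt f s := (hf s hs).continuousAt hmem
    exact (intervalIntegral.integral_hasDerivAt_right hint hmeas hca).hasDerivWithinAt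

/-- With `T' + αT = 0`, `T 0 = 1`, `K s = T s (∫₀ˢ T_r⁻¹ (T_r⁻¹)ᴴ dr) (T 1)ᴴ`, the path
`J s = K s K₁⁻¹ a` satisfies `J 0 = 0` and the ODE `J' s = -α s J s + φ s`, where
`φ s = (T 1 (T s)⁻¹)ᴴ K₁⁻¹ a`. -/
theorem stmt9 {d : ℕ} (α T : ℝ → Matrix (Fin d) (Fin d) ℝ) (a : Fin d → ℝ)
    (hα : ContinuousOn α (Set.Icc (0 : ℝ) 1))
    (hT : ∀ t ∈ Set.Icc (0 : ℝ) 1,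
      HasDerivWithinAt T (-(α t * T t)) (Set.Icc (0 : ℝ) 1) t)
    (hT0 : T 0 = 1)
    (K : ℝ → Matrix (Fin d) (Fin d) ℝ)
    (hK : K = fun s => T s * (∫ r in (0 : ℝ)..s, (T r)⁻¹ * ((T r)⁻¹)ᴴ) * (T 1)ᴴ)
    (J : ℝ → Fin d → ℝ)
    (hJ : J = fun s => K s *ᵥ ((K 1)⁻¹ *ᵥ a)) :
    J 0 = 0 ∧
      ∀ s ∈ Set.Icc (0 : ℝ) 1,
        HasDerivWithinAt J (-(α s *ᵥ J s) + (T 1 * (T s)⁻¹)ᴴ *ᵥ ((K 1)⁻¹ *ᵥ a))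
          (Set.Icc (0 : ℝ) 1) s := by
  have hTc : ContinuousOn T (Set.Icc (0:ℝ) 1) := fun t ht => (hT t ht).continuousWithinAt
  have hU := stmt9_isUnit α T hα hT hT0
  have hUdet : ∀ s ∈ Set.Icc (0:ℝ) 1, IsUnit (T s).det := fun s hs =>
    (Matrix.isUnit_iff_isUnit_det _).mp (hU s hs)
  constructor
  · rw [hJ, hK]
    simp [intervalIntegral.integral_same]
  · intro s hs
    -- continuity of the inverse
    have hTinv : ContinuousOn (fun r => (T r)⁻¹) (Set.Icc (0:ℝ) 1) := by
      have hdet : ContinuousOn (fun r => (T r).det) (Set.Icc (0:ℝ) 1) :=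
        continuous_id.matrix_det.comp_continuousOn hTc
      have hadj : ContinuousOn (fun r => (T r).adjugate) (Set.Icc (0:ℝ) 1) :=
        continuous_id.matrix_adjugate.comp_continuousOn hTc
      have hne : ∀ r ∈ Set.Icc (0:ℝ) 1, (T r).det ≠ 0 := fun r hr => (hUdet r hr).ne_zero
      have hcc : ContinuousOn (fun r => ((T r).det)⁻¹ • (T r).adjugate) (Set.Icc (0:ℝ) 1) :=
        (hdet.inv₀ hne).smul hadj
      refine hcc.congr fun r _ => ?_
      rw [Matrix.inv_def, Ring.inverse_eq_inv]
    have hf_cont : ContinuousOn (fun r => (T r)⁻¹ * ((T r)⁻¹)ᴴ) (Set.Icc (0:ℝ) 1) :=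
      hTinv.mul (continuous_id.matrix_conjTranspose.comp_continuousOn hTinv)
    have hG := stmt9_ftc _ hf_cont s hs
    have hKd : HasDerivWithinAt K
        ((-(α s * T s) * (∫ r in (0:ℝ)..s, (T r)⁻¹ * ((T r)⁻¹)ᴴ)
          + T s * ((T s)⁻¹ * ((T s)⁻¹)ᴴ)) * (T 1)ᴴ) (Set.Icc (0:ℝ) 1) s := by
      rw [hK]
      exact ((hT s hs).mul hG).mul_const _
    have hJd := stmt9_hasDeriv_mulVec ((K 1)⁻¹ *ᵥ a) K _ _ s hKd
    rw [hJ]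
    convert hJd using 1
    have hTs : T s * (T s)⁻¹ = 1 := Matrix.mul_nonsing_inv _ (hUdet s hs)
    have e2 : T s * ((T s)⁻¹ * ((T s)⁻¹)ᴴ) = ((T s)⁻¹)ᴴ := by
      rw [← mul_assoc, hTs, one_mul]
    rw [add_mul, e2, Matrix.add_mulVec, ← Matrix.conjTranspose_mul]
    congr 1
    rw [hK]
    simp only [neg_mul, Matrix.neg_mulVec, mul_assoc, Matrix.mulVec_mulVec]
end
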